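/- arXiv:1404.0110 — 2 statements merged into one kernel-verified Lean document; each statement's English description precedes it below -/
import Mathlib

section
/- Let q be a prime power such that 3 divides q-1. Then there exist vectors u, v ∈ D_q with Ẽ(u) ∩ Ẽ(v) = ∅; in particular the family {Ẽ(u) : u ∈ D_q} is t-intersecting only for t = 0. -/
open Set Pointwise

variable {F : Type*} [Field F]

/-- Hamming distance on `𝔽_q³`. -/
noncomputable def hdist (u v : Fin 3 → F) : ℕ := Set.ncard {i : Fin 3 | u i ≠ v i}

/-- The ball of radius 1 centered at `u`. -/
def ball (u : Fin 3 → F) : Set (Fin 3 → F) := {v | hdist u v ≤ 1}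

/-- The extended ball of `u`: the union of the balls centered at scalar multiples of `u`. -/
def extBall (u : Fin 3 → F) : Set (Fin 3 → F) := ⋃ l : F, ball (l • u)

/-- `D_q`: vectors with pairwise distinct, nonzero coordinates. -/
def Dq : Set (Fin 3 → F) :=
  {u | u 0 ≠ u 1 ∧ u 0 ≠ u 2 ∧ u 1 ≠ u 2 ∧ u 0 ≠ 0 ∧ u 1 ≠ 0 ∧ u 2 ≠ 0}

/-- `B̃(u) = B(u) ∩ D_q`. -/
def ballD (u : Fin 3 → F) : Set (Fin 3 → F) := ball u ∩ Dq

/-- `Ẽ(u) = E(u) ∩ D_q`. -/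
def extBallD (u : Fin 3 → F) : Set (Fin 3 → F) := extBall u ∩ Dq

/-- `H` is a short covering if the extended balls centered at its elements cover the space. -/
def ShortCovering (H : Set (Fin 3 → F)) : Prop := (⋃ h ∈ H, extBall h) = Set.univ

lemma hdist_le_one_iff (u v : Fin 3 → F) :
    hdist u v ≤ 1 ↔
      (u 0 = v 0 ∧ u 1 = v 1) ∨ (u 0 = v 0 ∧ u 2 = v 2) ∨ (u 1 = v 1 ∧ u 2 = v 2) := by
  constructor
  · intro h
    by_contra hc
    push_neg at hc
    obtain ⟨h01, h02, h12⟩ := hc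
    have two : ∀ i j : Fin 3, i ≠ j → u i ≠ v i → u j ≠ v j → False := by
      intro i j hij hi hj
      have : 1 < hdist u v :=
        (Set.one_lt_ncard_iff (Set.toFinite _)).2 ⟨i, j, hi, hj, hij⟩
      omega
    by_cases h0 : u 0 = v 0
    · exact two 1 2 (by decide) (h01 h0) (h02 h0)
    · by_cases h1 : u 1 = v 1
      · exact two 0 2 (by decide) h0 (h12 h1)
      · exact two 0 1 (by decide) h0 h1
  · rintro (⟨h1, h2⟩ | ⟨h1, h2⟩ | ⟨h1, h2⟩)
    · have hsub : {i : Fin 3 | u i ≠ v i} ⊆ {2} := by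
        intro i hi; fin_cases i <;> simp_all
      calc hdist u v ≤ ({2} : Set (Fin 3)).ncard :=
            Set.ncard_le_ncard hsub (Set.toFinite _)
        _ = 1 := Set.ncard_singleton _
    · have hsub : {i : Fin 3 | u i ≠ v i} ⊆ {1} := by
        intro i hi; fin_cases i <;> simp_all
      calc hdist u v ≤ ({1} : Set (Fin 3)).ncard :=
            Set.ncard_le_ncard hsub (Set.toFinite _)
        _ = 1 := Set.ncard_singleton _
    · have hsub : {i : Fin 3 | u i ≠ v i} ⊆ {0} := by
        intro i hi; fin_cases i <;> simp_all
      calc hdist u v ≤ ({0} : Set (Fin 3)).ncard :=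
            Set.ncard_le_ncard hsub (Set.toFinite _)
        _ = 1 := Set.ncard_singleton _

lemma self_mem_extBallD {u : Fin 3 → F} (hu : u ∈ (Dq : Set (Fin 3 → F))) :
    u ∈ extBallD u := by
  refine ⟨Set.mem_iUnion.2 ⟨1, ?_⟩, hu⟩
  simp [ball, hdist, one_smul, Set.mem_setOf_eq]

theorem stmt_2 (q : ℕ) (hq : IsPrimePow q) (F : Type*) [Field F] [Fintype F]
    (hcard : Fintype.card F = q) (h3 : 3 ∣ q - 1) :
    (∃ u ∈ (Dq : Set (Fin 3 → F)), ∃ v ∈ (Dq : Set (Fin 3 → F)),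
        extBallD u ∩ extBallD v = ∅) ∧
    ∀ t : ℕ, (∀ u ∈ (Dq : Set (Fin 3 → F)), ∀ v ∈ (Dq : Set (Fin 3 → F)),
        extBallD u ≠ extBallD v → t ≤ (extBallD u ∩ extBallD v).ncard) → t = 0 := by
  classical
  -- obtain a primitive cube root of unity
  have hcardU : Fintype.card Fˣ = q - 1 := by rw [Fintype.card_units, hcard]
  have h3' : 3 ∣ Fintype.card Fˣ := by rw [hcardU]; exact h3
  haveI : Fact (Nat.Prime 3) := ⟨by norm_num⟩
  obtain ⟨ζ, hζ⟩ := exists_prime_orderOf_dvd_card 3 h3'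
  set ω : F := (ζ : F) with hωdef
  have hω0 : ω ≠ 0 := ζ.ne_zero
  have hω3 : ω ^ 3 = 1 := by
    have : ζ ^ 3 = 1 := by rw [← hζ]; exact pow_orderOf_eq_one ζ
    have := congrArg (Units.val) this
    simpa [hωdef] using this
  have hω1 : ω ≠ 1 := by
    intro h
    have : ζ = 1 := Units.ext (by simpa [hωdef] using h)
    rw [this] at hζ; simp at hζ
  have hωω : ω ≠ ω ^ 2 := by
    intro h
    have h' : ω * 1 = ω * ω := by linear_combination h
    exact hω1 (mul_left_cancel₀ hω0 h').symm
  have hω21 : ω ^ 2 ≠ 1 := by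
    intro h
    apply hω1
    calc ω = ω * ω ^ 2 := by rw [h, mul_one]
      _ = ω ^ 3 := by ring
      _ = 1 := hω3
  set u : Fin 3 → F := ![1, ω, ω ^ 2] with hu
  set v : Fin 3 → F := ![1, ω ^ 2, ω] with hv
  have huD : u ∈ (Dq : Set (Fin 3 → F)) := by
    simp only [hu, Dq, Set.mem_setOf_eq, Matrix.cons_val_zero, Matrix.cons_val_one,
      Matrix.head_cons, Matrix.cons_val_two, Matrix.tail_cons]
    exact ⟨fun h => hω1 h.symm, fun h => hω21 h.symm, hωω, one_ne_zero, hω0,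
      pow_ne_zero _ hω0⟩
  have hvD : v ∈ (Dq : Set (Fin 3 → F)) := by
    simp only [hv, Dq, Set.mem_setOf_eq, Matrix.cons_val_zero, Matrix.cons_val_one,
      Matrix.head_cons, Matrix.cons_val_two, Matrix.tail_cons]
    exact ⟨fun h => hω21 h.symm, fun h => hω1 h.symm, fun h => hωω h.symm, one_ne_zero,
      pow_ne_zero _ hω0, hω0⟩
  have hdisj : extBallD u ∩ extBallD v = ∅ := by
    ext w
    simp only [Set.mem_inter_iff, Set.mem_empty_iff_false, iff_false]
    rintro ⟨⟨hwu, hwD⟩, ⟨hwv, -⟩⟩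
    obtain ⟨hab, hac, hbc, ha0, hb0, hc0⟩ := hwD
    obtain ⟨l, hl⟩ := Set.mem_iUnion.1 hwu
    obtain ⟨m, hm⟩ := Set.mem_iUnion.1 hwv
    have hl' := (hdist_le_one_iff _ _).1 hl
    have hm' := (hdist_le_one_iff _ _).1 hm
    simp only [hu, hv, Pi.smul_apply, smul_eq_mul, Matrix.cons_val_zero, Matrix.cons_val_one,
      Matrix.head_cons, Matrix.cons_val_two, Matrix.tail_cons, mul_one] at hl' hm'
    rcases hl' with ⟨e1, e2⟩ | ⟨e1, e2⟩ | ⟨e1, e2⟩ <;>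
      rcases hm' with ⟨f1, f2⟩ | ⟨f1, f2⟩ | ⟨f1, f2⟩
    -- case 1: l = a, lω = b ; m = a, mω² = b
    · subst e1; subst f1
      exact hωω (mul_left_cancel₀ ha0 (e2.trans f2.symm))
    -- case 2: l = a, lω = b ; m = a, mω = c
    · subst e1; subst f1
      exact hbc (e2.symm.trans f2)
    -- case 3: l = a, lω = b ; mω² = b, mω = c
    · subst e1
      have h : m * ω = w 0 := by
        apply mul_right_cancel₀ hω0
        linear_combination f1 - e2
      exact hac (h.symm.trans f2)
    -- case 4: l = a, lω² = c ; m = a, mω² = b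
    · subst e1; subst f1
      exact hbc (f2.symm.trans e2)
    -- case 5: l = a, lω² = c ; m = a, mω = c
    · subst e1; subst f1
      exact hωω (mul_left_cancel₀ ha0 (f2.trans e2.symm))
    -- case 6: l = a, lω² = c ; mω² = b, mω = c
    · subst e1
      have h : m = w 0 * ω := by
        apply mul_right_cancel₀ hω0
        linear_combination f2 - e2
      have : w 0 * ω ^ 3 = w 1 := by
        rw [show w 0 * ω ^ 3 = (w 0 * ω) * ω ^ 2 by ring, ← h]; exact f1
      exact hab (by rw [← this, hω3, mul_one])
    -- case 7: lω = b, lω² = c ; m = a, mω² = b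
    · subst f1
      have h : l = w 0 * ω := by
        apply mul_right_cancel₀ hω0
        linear_combination e1 - f2
      have : w 0 * ω ^ 3 = w 2 := by
        rw [show w 0 * ω ^ 3 = (w 0 * ω) * ω ^ 2 by ring, ← h]; exact e2
      exact hac (by rw [← this, hω3, mul_one])
    -- case 8: lω = b, lω² = c ; m = a, mω = c
    · subst f1
      have h : w 0 = l * ω := by
        apply mul_right_cancel₀ hω0
        linear_combination f2 - e2
      exact hab (h.trans e1)
    -- case 9: lω = b, lω² = c ; mω² = b, mω = c
    · have hm0 : m ≠ 0 := by
        rintro rfl; rw [zero_mul] at f2; exact hc0 f2.symm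
      have h1 : l = m * ω := by
        apply mul_right_cancel₀ hω0
        linear_combination e1 - f1
      have h2 : m * ω ^ 2 = m := by
        apply mul_right_cancel₀ hω0
        calc m * ω ^ 2 * ω = l * ω ^ 2 := by rw [h1]; ring
          _ = w 2 := e2
          _ = m * ω := f2.symm
      have h3' : m * 1 = m * ω := by
        calc m * 1 = m * ω ^ 3 := by rw [hω3]
          _ = (m * ω ^ 2) * ω := by ring
          _ = m * ω := by rw [h2]
      exact hω1 (mul_left_cancel₀ hm0 h3').symm
  constructor
  · exact ⟨u, huD, v, hvD, hdisj⟩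
  · intro t ht
    have hne : extBallD u ≠ extBallD v := by
      intro h
      have : u ∈ extBallD u ∩ extBallD v := ⟨self_mem_extBallD huD, h ▸ self_mem_extBallD huD⟩
      rw [hdisj] at this
      exact this
    have := ht u huD v hvD hne
    rw [hdisj, Set.ncard_empty] at this
    omega
end

section
/- Let q be a prime power and u ∈ 𝔽_q³ a vector all of whose three coordinates are nonzero. Then for all distinct nonzero scalars λ, λ' ∈ 𝔽_q*, the balls B(λu) and B(λ'u) are disjoint; consequently |Ẽ(u)| = (q-1)·|B̃(u)|. -/
open Set Pointwise

variable {F : Type*} [Field F]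

lemma hdist_smul (l : F) (hl : l ≠ 0) (u v : Fin 3 → F) :
    hdist (l • u) (l • v) = hdist u v := by
  unfold hdist
  congr 1
  ext i
  simp only [Set.mem_setOf_eq, Pi.smul_apply, smul_eq_mul]
  exact not_congr (mul_right_inj' hl)

lemma smul_mem_Dq {l : F} (hl : l ≠ 0) {v : Fin 3 → F} (hv : v ∈ Dq) : l • v ∈ Dq := by
  obtain ⟨h1, h2, h3, h4, h5, h6⟩ := hv
  refine ⟨?_, ?_, ?_, ?_, ?_, ?_⟩ <;>
    simp only [Pi.smul_apply, smul_eq_mul, ne_eq, mul_right_inj' hl, mul_eq_zero, not_or] <;>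
    tauto

lemma balls_disjoint {u : Fin 3 → F} (h0 : ∀ i : Fin 3, u i ≠ 0) {l l' : F}
    (hne : l ≠ l') : ball (l • u) ∩ ball (l' • u) = ∅ := by
  by_contra h
  obtain ⟨v, hv1, hv2⟩ := Set.nonempty_iff_ne_empty.mpr h
  have hsub : (Set.univ : Set (Fin 3)) ⊆
      {i : Fin 3 | (l • u) i ≠ v i} ∪ {i : Fin 3 | (l' • u) i ≠ v i} := by
    intro i _
    by_contra hi
    simp only [Set.mem_union, Set.mem_setOf_eq, not_or, not_not] at hi
    apply hne
    have : l * u i = l' * u i := by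
      have := hi.1.trans hi.2.symm
      simpa using this
    exact mul_right_cancel₀ (h0 i) this
  have h3 : (Set.univ : Set (Fin 3)).ncard = 3 := by
    simp [Set.ncard_univ]
  have hle : (Set.univ : Set (Fin 3)).ncard ≤
      ({i : Fin 3 | (l • u) i ≠ v i}).ncard + ({i : Fin 3 | (l' • u) i ≠ v i}).ncard := by
    refine le_trans (Set.ncard_le_ncard hsub (Set.toFinite _)) (Set.ncard_union_le _ _)
  have := hle.trans (Nat.add_le_add hv1 hv2)
  omega

lemma Dq_smul_cancel {l : F} (hl : l ≠ 0) {v w : Fin 3 → F} (h : l • v = l • w) : v = w := by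
  funext i
  have := congrFun h i
  simp only [Pi.smul_apply, smul_eq_mul] at this
  exact mul_left_cancel₀ hl this

theorem stmt_8 (q : ℕ) (hq : IsPrimePow q) (F : Type*) [Field F] [Fintype F]
    (hcard : Fintype.card F = q) (u : Fin 3 → F) (h0 : ∀ i : Fin 3, u i ≠ 0) :
    (∀ l l' : F, l ≠ 0 → l' ≠ 0 → l ≠ l' → ball (l • u) ∩ ball (l' • u) = ∅) ∧
    (extBallD u).ncard = (q - 1) * (ballD u).ncard := by
  refine ⟨fun l l' _ _ hne => balls_disjoint h0 hne, ?_⟩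
  set S : Set F := {l : F | l ≠ 0} with hS
  have himg : extBallD u = (fun p : F × (Fin 3 → F) => p.1 • p.2) '' (S ×ˢ ballD u) := by
    ext v
    constructor
    · rintro ⟨hv1, hv2⟩
      obtain ⟨_, ⟨l, rfl⟩, hl⟩ := hv1
      have hlne : l ≠ 0 := by
        rintro rfl
        have : hdist ((0 : F) • u) v = 3 := by
          unfold hdist
          have : {i : Fin 3 | ((0 : F) • u) i ≠ v i} = Set.univ := by
            ext i
            simp only [Set.mem_setOf_eq, Pi.smul_apply, zero_smul, Set.mem_univ, iff_true]
            obtain ⟨_, _, _, h4, h5, h6⟩ := hv2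
            fin_cases i
            · exact fun h => h4 h.symm
            · exact fun h => h5 h.symm
            · exact fun h => h6 h.symm
          rw [this]; simp [Set.ncard_univ]
        have := hl
        simp only [ball, Set.mem_setOf_eq] at this
        omega
      refine ⟨(l, l⁻¹ • v), ⟨hlne, ?_, ?_⟩, ?_⟩
      · show hdist u (l⁻¹ • v) ≤ 1
        have : hdist u (l⁻¹ • v) = hdist (l • u) v := by
          rw [← hdist_smul l hlne u (l⁻¹ • v), smul_smul, mul_inv_cancel₀ hlne, one_smul]
        rw [this]; exact hl
      · exact smul_mem_Dq (inv_ne_zero hlne) hv2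
      · simp [smul_smul, mul_inv_cancel₀ hlne]
    · rintro ⟨⟨l, w⟩, ⟨hl, hw1, hw2⟩, rfl⟩
      refine ⟨Set.mem_iUnion.mpr ⟨l, ?_⟩, smul_mem_Dq hl hw2⟩
      show hdist (l • u) (l • w) ≤ 1
      rw [hdist_smul l hl]
      exact hw1
  have hinj : Set.InjOn (fun p : F × (Fin 3 → F) => p.1 • p.2) (S ×ˢ ballD u) := by
    rintro ⟨l, w⟩ ⟨hl, hw1, hw2⟩ ⟨l', w'⟩ ⟨hl', hw1', hw2'⟩ heq
    simp only at heq
    have hll : l = l' := by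
      by_contra hne
      have h1 : l • w ∈ ball (l • u) := by
        show hdist (l • u) (l • w) ≤ 1; rw [hdist_smul l hl]; exact hw1
      have h2 : l • w ∈ ball (l' • u) := by
        rw [heq]; show hdist (l' • u) (l' • w') ≤ 1; rw [hdist_smul l' hl']; exact hw1'
      have := balls_disjoint h0 hne
      exact absurd (this ▸ Set.mem_inter h1 h2) (Set.notMem_empty _)
    subst hll
    exact Prod.ext rfl (Dq_smul_cancel hl heq)
  rw [himg, Set.ncard_image_of_injOn hinj]
  have hprod : (S ×ˢ ballD u).ncard = S.ncard * (ballD u).ncard := by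
    rw [← Nat.card_coe_set_eq, ← Nat.card_coe_set_eq, ← Nat.card_coe_set_eq]
    rw [Nat.card_congr (Equiv.Set.prod S (ballD u)), Nat.card_prod]
  rw [hprod]
  congr 1
  have : S = ({0} : Set F)ᶜ := by ext x; simp [hS]
  rw [this, ← hcard]
  have h1 := Set.ncard_add_ncard_compl ({0} : Set F)
  have h2 : ({0} : Set F).ncard = 1 := Set.ncard_singleton 0
  rw [Nat.card_eq_fintype_card] at h1
  omega
end
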